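/- For any canonical-model state s = X_0⟨(φ_1,G_1),H_1⟩X_1⋯⟨(φ_n,G_n),H_n⟩X_n ∈ S^c, any k ≤ n, any group H ⊆ I, and any formula φ: if K_H φ ∈ X_n and H ⊆ H_j for all k < j ≤ n, then K_H φ ∈ X_k. -/

import Mathlib

namespace DKH

/-- Groups of agents: subsets of the finite agent set `I = {i_0, …, i_{n-1}}`. -/
abbrev Grp (n : ℕ) := Finset (Fin n)

/-- The language DKH: φ ::= ⊤ | p | ¬φ | (φ∧φ) | K_G φ | Kh_G φ. -/
inductive Formula (P : Type) (n : ℕ) : Type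
  | top  : Formula P n
  | atom : P → Formula P n
  | neg  : Formula P n → Formula P n
  | and  : Formula P n → Formula P n → Formula P n
  | K    : Grp n → Formula P n → Formula P n
  | Kh   : Grp n → Formula P n → Formula P n

instance {P n} : Inhabited (Formula P n) := ⟨.top⟩

namespace Formula
/-- Defined implication φ → ψ := ¬(φ ∧ ¬ψ). -/
def imp {P n} (φ ψ : Formula P n) : Formula P n := .neg (φ.and ψ.neg)
/-- Defined falsum ⊥ := ¬⊤. -/
def bot {P : Type} {n : ℕ} : Formula P n := .neg .top
end Formula

/-- A model ⟨S, {∼_i}, {A_G}, {→_a}, V⟩. -/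
structure KhModel (P : Type) (n : ℕ) where
  State : Type
  Act : Type
  sim : Fin n → State → State → Prop
  sim_equiv : ∀ i, Equivalence (sim i)
  A : Grp n → Set Act
  A_empty : A ∅ = ∅
  A_disj : ∀ G H : Grp n, G ⊂ H → A G ∩ A H = ∅
  tr : Act → State → State → Prop
  V : P → Set State

/-- Distributed indistinguishability: s ∼_G t iff s ∼_i t for every i ∈ G. -/
def gsim {P n} (M : KhModel P n) (G : Grp n) (s t : M.State) : Prop :=
  ∀ i ∈ G, M.sim i s t

/-- Distributed actions: atomic group actions, or joint tuples ⟨d_0,…,d_k⟩. -/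
inductive DAct (Act : Type) : Type
  | atom : Act → DAct Act
  | joint : List (DAct Act) → DAct Act

mutual
/-- Distributed transition relation: →_{⟨d_0,…,d_k⟩} = ⋂_j →_{d_j}. -/
def dtr {Act State : Type} (tr : Act → State → State → Prop) :
    DAct Act → State → State → Prop
  | .atom a, s, t => tr a s t
  | .joint ds, s, t => dtrList tr ds s t

def dtrList {Act State : Type} (tr : Act → State → State → Prop) :
    List (DAct Act) → State → State → Prop
  | [], _, _ => True
  | d :: ds, s, t => dtr tr d s t ∧ dtrList tr ds s t
end

/-- `Gs` is a partial partition of `G`: a family of nonempty, pairwise disjoint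
blocks, all included in `G` (i.e. a partition of a subset of `G`). -/
def PartialPartition {n : ℕ} (G : Grp n) (Gs : List (Grp n)) : Prop :=
  (∀ B ∈ Gs, B ≠ ∅) ∧ Gs.Pairwise (fun B C => Disjoint B C) ∧ (∀ B ∈ Gs, B ⊆ G)

/-- The fixed ordering on mutually disjoint nonempty groups: G ≺ H iff the
minimal index of an agent in G is below that of H. -/
def grpLt {n : ℕ} (B C : Grp n) : Prop := B.min < C.min

/-- Membership in the set A*_G of distributed actions of group G:
the closure of A^+_G = ⋃_{G'⊆G} A_{G'} under forming joint actions
⟨d_0,…,d_k⟩ ∈ A*_{G_0} × ⋯ × A*_{G_k} for non-trivial partial partitions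
{G_0,…,G_k} of G listed in the fixed order ≺. -/
inductive star {n : ℕ} {Act : Type} (A : Grp n → Set Act) : Grp n → DAct Act → Prop
  | base {G G' : Grp n} {a : Act} :
      G' ⊆ G → a ∈ A G' → star A G (.atom a)
  | joint {G : Grp n} {Gs : List (Grp n)} {ds : List (DAct Act)} :
      2 ≤ Gs.length → PartialPartition G Gs → Gs.Chain' grpLt →
      List.Forall₂ (star A) Gs ds → star A G (.joint ds)

/-- Membership in A^+_G = ⋃_{G'⊆G} A_{G'} (as a set of distributed actions). -/
def inAplus {n : ℕ} {Act : Type} (A : Grp n → Set Act) (G : Grp n) (d : DAct Act) : Prop :=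
  ∃ G' : Grp n, G' ⊆ G ∧ ∃ a ∈ A G', d = .atom a

/-- d is executable on X if every s ∈ X has a d-successor. -/
def ExecutableOn {P n} (M : KhModel P n) (d : DAct M.Act) (X : Set M.State) : Prop :=
  ∀ s ∈ X, ∃ t, dtr M.tr d s t

/-- A strategy of group G: a partial function from ∼_G-equivalence classes to
A*_G such that the prescribed action is executable on the class. -/
structure Strategy {P n} (M : KhModel P n) (G : Grp n) where
  act : M.State → Option (DAct M.Act)
  uniform : ∀ s t, gsim M G s t → act s = act t
  mem_star : ∀ s d, act s = some d → star M.A G d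
  exec : ∀ s d, act s = some d → ∀ t, gsim M G s t → ∃ u, dtr M.tr d t u

/-- One step of an execution: [s]_G →_{σ([s]_G)} [t]_G. -/
def stepRel {P n} {M : KhModel P n} {G : Grp n} (σ : Strategy M G) (s t : M.State) : Prop :=
  ∃ d, σ.act s = some d ∧ ∃ u v, gsim M G s u ∧ gsim M G t v ∧ dtr M.tr d u v

/-- Leaf-nodes of the finite complete executions of σ starting from [s]_G,
as a ∼_G-closed set of states. -/
def CELeaf {P n} {M : KhModel P n} {G : Grp n} (σ : Strategy M G) (s : M.State) :
    Set M.State :=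
  {t | ∃ (m : ℕ) (f : ℕ → M.State), gsim M G s (f 0) ∧
    (∀ j < m, stepRel σ (f j) (f (j+1))) ∧ σ.act (f m) = none ∧ gsim M G (f m) t}

/-- There is an infinite (hence complete) execution of σ starting from [s]_G. -/
def InfiniteFrom {P n} {M : KhModel P n} {G : Grp n} (σ : Strategy M G) (s : M.State) : Prop :=
  ∃ f : ℕ → M.State, gsim M G s (f 0) ∧ ∀ j, stepRel σ (f j) (f (j+1))

/-- Inner-nodes of the complete executions of σ starting from [s]_G,
as a ∼_G-closed set of states. -/
def CEInner {P n} {M : KhModel P n} {G : Grp n} (σ : Strategy M G) (s : M.State) :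
    Set M.State :=
  {t | (∃ (m : ℕ) (f : ℕ → M.State), gsim M G s (f 0) ∧
          (∀ j < m, stepRel σ (f j) (f (j+1))) ∧ σ.act (f m) = none ∧
          ∃ j < m, gsim M G (f j) t) ∨
       (∃ f : ℕ → M.State, gsim M G s (f 0) ∧
          (∀ j, stepRel σ (f j) (f (j+1))) ∧ ∃ j, gsim M G (f j) t)}

/-- Truth at a pointed model. -/
def Sat {P n} (M : KhModel P n) : M.State → Formula P n → Prop
  | _, .top => True
  | s, .atom p => s ∈ M.V p
  | s, .neg φ => ¬ Sat M s φ
  | s, .and φ ψ => Sat M s φ ∧ Sat M s ψ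
  | s, .K G φ => ∀ t, gsim M G s t → Sat M t φ
  | s, .Kh G φ => ∃ σ : Strategy M G,
      (∀ t ∈ CELeaf σ s, Sat M t φ) ∧ ¬ InfiniteFrom σ s

/-- Boolean evaluation treating ⊤, ¬, ∧ as connectives and everything else
as atoms; used to define propositional tautologies. -/
def beval {P n} (v : Formula P n → Bool) : Formula P n → Bool
  | .top => true
  | .atom p => v (.atom p)
  | .neg φ => !(beval v φ)
  | .and φ ψ => beval v φ && beval v ψ
  | .K G φ => v (.K G φ)
  | .Kh G φ => v (.Kh G φ)

/-- Instances of propositional tautologies. -/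
def IsTaut {P n} (φ : Formula P n) : Prop := ∀ v, beval v φ = true

/-- The proof system SDKH. -/
inductive Provable {P : Type} {n : ℕ} : Formula P n → Prop
  | taut {φ} : IsTaut φ → Provable φ
  | distK {G : Grp n} {φ ψ} :
      Provable (((Formula.K G φ).and (Formula.K G (φ.imp ψ))).imp (Formula.K G ψ))
  | axT {G : Grp n} {φ} : Provable ((Formula.K G φ).imp φ)
  | ax4 {G : Grp n} {φ} : Provable ((Formula.K G φ).imp (Formula.K G (Formula.K G φ)))
  | ax5 {G : Grp n} {φ} :
      Provable ((Formula.neg (Formula.K G φ)).imp (Formula.K G (Formula.neg (Formula.K G φ))))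
  | axKMono {G H : Grp n} {φ} : G ⊆ H → Provable ((Formula.K G φ).imp (Formula.K H φ))
  | axKhMono {G H : Grp n} {φ} : G ⊆ H → Provable ((Formula.Kh G φ).imp (Formula.Kh H φ))
  | axKtoKh {G : Grp n} {φ} : Provable ((Formula.K G φ).imp (Formula.Kh G φ))
  | axEmpKhtoK {φ} : Provable ((Formula.Kh ∅ φ).imp (Formula.K ∅ φ))
  | axKhtoKKh {G : Grp n} {φ} : Provable ((Formula.Kh G φ).imp (Formula.K G (Formula.Kh G φ)))
  | axEmpMono {G : Grp n} {φ ψ} :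
      Provable ((Formula.K ∅ (φ.imp ψ)).imp (Formula.K ∅ ((Formula.Kh G φ).imp (Formula.Kh G ψ))))
  | axKhbot {G : Grp n} : Provable ((Formula.Kh G Formula.bot).imp Formula.bot)
  | axKhtoKhK {G : Grp n} {φ} : Provable ((Formula.Kh G φ).imp (Formula.Kh G (Formula.K G φ)))
  | axKhKh {G : Grp n} {φ} : Provable ((Formula.Kh G (Formula.Kh G φ)).imp (Formula.Kh G φ))
  | mp {φ ψ} : Provable (φ.imp ψ) → Provable φ → Provable ψ
  | necK {G : Grp n} {φ} : Provable φ → Provable (Formula.K G φ)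

/-- Conjunction of a finite list of formulas. -/
def conj {P n} (L : List (Formula P n)) : Formula P n := L.foldr Formula.and Formula.top

/-- SDKH-consistency of a set of formulas. -/
def Consistent {P n} (X : Set (Formula P n)) : Prop :=
  ¬ ∃ L : List (Formula P n), (∀ φ ∈ L, φ ∈ X) ∧ Provable ((conj L).imp Formula.bot)

/-- Maximal consistent sets. -/
def MCS {P n} (X : Set (Formula P n)) : Prop :=
  Consistent X ∧ ∀ φ ∉ X, ¬ Consistent (insert φ X)

/-! ### The canonical model -/

/-- One step ⟨(φ,G),H⟩X of a mixed sequence. -/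
structure CStep (P : Type) (n : ℕ) where
  fml : Formula P n
  G : Grp n
  H : Grp n
  X : Set (Formula P n)

instance {P n} : Inhabited (CStep P n) := ⟨⟨.top, ∅, ∅, ∅⟩⟩

/-- The conditions on a mixed sequence X_0⟨(φ_1,G_1),H_1⟩X_1⋯⟨(φ_n,G_n),H_n⟩X_n
(the previous MCS being `X`). -/
def goodFrom {P n} : Set (Formula P n) → List (CStep P n) → Prop
  | _, [] => True
  | X, c :: rest =>
      MCS c.X ∧ c.G ≠ ∅ ∧ (Formula.Kh c.G c.fml) ∈ X ∧ (Formula.K c.G c.fml) ∈ c.X ∧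
      (∀ ψ, (Formula.K c.H ψ) ∈ X → ψ ∈ c.X) ∧ goodFrom c.X rest

/-- The final MCS `ed(s)` of a mixed sequence. -/
def edOf {P n} (X0 : Set (Formula P n)) (l : List (CStep P n)) : Set (Formula P n) :=
  l.foldl (fun _ c => c.X) X0

/-- States of the canonical model: mixed sequences starting at X_0. -/
def CState {P : Type} {n : ℕ} (X0 : Set (Formula P n)) := {l : List (CStep P n) // goodFrom X0 l}

/-- Canonical epistemic relation ∼^c_i. -/
def csim {P n} (X0 : Set (Formula P n)) (i : Fin n) (s t : CState X0) : Prop :=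
  ∃ k : ℕ, k ≤ s.1.length ∧ k ≤ t.1.length ∧
    (∀ j < k, (s.1.getD j default).X = (t.1.getD j default).X ∧
              (s.1.getD j default).H = (t.1.getD j default).H) ∧
    (∀ j, k ≤ j → j < s.1.length → i ∈ (s.1.getD j default).H) ∧
    (∀ j, k ≤ j → j < t.1.length → i ∈ (t.1.getD j default).H)

/-- Canonical atomic actions: pairs (φ, G). -/
abbrev CAct (P : Type) (n : ℕ) := Formula P n × Grp n

/-- Canonical atomic action sets A^c_G = {(φ,G) : φ ∈ DKH} for G ≠ ∅, A^c_∅ = ∅. -/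
def cA {P : Type} {n : ℕ} (G : Grp n) : Set (CAct P n) := {a | a.2 = G ∧ G ≠ ∅}

/-- Canonical transition: s →_{(φ,G)} t iff t = s⟨(φ,G),G'⟩X for some G' and MCS X. -/
def ctr {P n} (X0 : Set (Formula P n)) (a : CAct P n) (s t : CState X0) : Prop :=
  ∃ (G' : Grp n) (Y : Set (Formula P n)), MCS Y ∧ t.1 = s.1 ++ [⟨a.1, a.2, G', Y⟩]

theorem csim_equiv {P n} (X0 : Set (Formula P n)) (i : Fin n) : Equivalence (csim X0 i) := by
  constructor
  · intro s
    exact ⟨s.1.length, le_rfl, le_rfl, fun j _ => ⟨rfl, rfl⟩,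
      fun j h1 h2 => absurd h2 (by omega), fun j h1 h2 => absurd h2 (by omega)⟩
  · rintro s t ⟨k, h1, h2, h3, h4, h5⟩
    exact ⟨k, h2, h1, fun j hj => ⟨(h3 j hj).1.symm, (h3 j hj).2.symm⟩, h5, h4⟩
  · rintro s t u ⟨k1, hk1s, hk1t, heq1, hs1, ht1⟩ ⟨k2, hk2t, hk2u, heq2, ht2, hu2⟩
    refine ⟨min k1 k2, le_trans (min_le_left _ _) hk1s, le_trans (min_le_right _ _) hk2u,
      ?_, ?_, ?_⟩
    · intro j hj
      have e1 := heq1 j (lt_of_lt_of_le hj (min_le_left _ _))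
      have e2 := heq2 j (lt_of_lt_of_le hj (min_le_right _ _))
      exact ⟨e1.1.trans e2.1, e1.2.trans e2.2⟩
    · intro j hj hjs
      by_cases h : k1 ≤ j
      · exact hs1 j h hjs
      · have hj2 : k2 ≤ j := by omega
        have hjt : j < t.1.length := by omega
        have := ht2 j hj2 hjt
        have e := (heq1 j (by omega)).2
        rw [e]; exact this
    · intro j hj hju
      by_cases h : k2 ≤ j
      · exact hu2 j h hju
      · have hj1 : k1 ≤ j := by omega
        have hjt : j < t.1.length := by omega
        have := ht1 j hj1 hjt
        have e := (heq2 j (by omega)).2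
        rw [← e]; exact this

theorem cA_empty {P : Type} {n : ℕ} : (cA (P := P) (n := n) ∅) = ∅ := by
  ext a; simp [cA]

theorem cA_disj {P : Type} {n : ℕ} (G H : Grp n) (h : G ⊂ H) :
    cA (P := P) (n := n) G ∩ cA H = ∅ := by
  ext a
  simp only [Set.mem_inter_iff, Set.mem_empty_iff_false, iff_false, cA, Set.mem_setOf_eq]
  rintro ⟨⟨rfl, -⟩, ⟨h2, -⟩⟩
  exact h.ne h2

/-- The canonical model M^c(X_0). -/
def canonicalModel {P : Type} {n : ℕ} (X0 : Set (Formula P n)) : KhModel P n where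
  State := CState X0
  Act := CAct P n
  sim := csim X0
  sim_equiv := csim_equiv X0
  A := cA
  A_empty := cA_empty
  A_disj := cA_disj
  tr := ctr X0
  V := fun p => {s : CState X0 | Formula.atom p ∈ edOf X0 s.1}


section Aux

variable {P : Type} {n : ℕ}

lemma provable_imp_trans {A B C : Formula P n}
    (h1 : Provable (A.imp B)) (h2 : Provable (B.imp C)) : Provable (A.imp C) := by
  have t : Provable ((A.imp B).imp ((B.imp C).imp (A.imp C))) := Provable.taut (by
    intro v; simp only [Formula.imp, beval]
    cases beval v A <;> cases beval v B <;> cases beval v C <;> simp)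
  exact Provable.mp (Provable.mp t h1) h2

lemma conj_imp_mem {L : List (Formula P n)} {φ : Formula P n} (h : φ ∈ L) :
    Provable ((conj L).imp φ) := by
  induction L with
  | nil => cases h
  | cons a L ih =>
    rcases List.mem_cons.mp h with rfl | h
    · exact Provable.taut (by
        intro v; simp only [conj, List.foldr, Formula.imp, beval]
        cases beval v φ <;> simp)
    · have h1 := ih h
      have t : Provable (((conj L).imp φ).imp ((conj (a :: L)).imp φ)) := Provable.taut (by
        intro v; simp only [conj, List.foldr, Formula.imp, beval]
        cases beval v a <;> cases beval v φ <;>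
          cases beval v (List.foldr Formula.and Formula.top L) <;> simp)
      exact Provable.mp t h1

lemma imp_conj {A : Formula P n} {L : List (Formula P n)}
    (h : ∀ φ ∈ L, Provable (A.imp φ)) : Provable (A.imp (conj L)) := by
  induction L with
  | nil => exact Provable.taut (by
      intro v; simp only [conj, List.foldr, Formula.imp, beval]
      cases beval v A <;> simp)
  | cons a L ih =>
    have h1 := h a List.mem_cons_self
    have h2 := ih (fun φ hφ => h φ (List.mem_cons_of_mem _ hφ))
    have t : Provable ((A.imp a).imp ((A.imp (conj L)).imp (A.imp (conj (a :: L))))) :=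
      Provable.taut (by
        intro v; simp only [conj, List.foldr, Formula.imp, beval]
        cases beval v A <;> cases beval v a <;>
          cases beval v (List.foldr Formula.and Formula.top L) <;> simp)
    exact Provable.mp (Provable.mp t h1) h2

lemma mcs_closed {X : Set (Formula P n)} (hX : MCS X) {φ ψ : Formula P n}
    (hφ : φ ∈ X) (himp : Provable (φ.imp ψ)) : ψ ∈ X := by
  classical
  by_contra hψ
  obtain ⟨L, hL, hprov⟩ := not_not.mp (hX.2 ψ hψ)
  set L' : List (Formula P n) := φ :: L.filter (fun χ => χ ≠ ψ) with hL'
  have hmem : ∀ χ ∈ L', χ ∈ X := by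
    intro χ hχ
    rcases List.mem_cons.mp hχ with rfl | hχ
    · exact hφ
    · obtain ⟨h1, h2⟩ := List.mem_filter.mp hχ
      have hne : χ ≠ ψ := by simpa using h2
      rcases hL χ h1 with h | h
      · exact absurd h hne
      · exact h
  have himpL : Provable ((conj L').imp (conj L)) := by
    apply imp_conj
    intro χ hχ
    by_cases hne : χ = ψ
    · subst hne
      have hφ' : Provable ((conj L').imp φ) := conj_imp_mem List.mem_cons_self
      exact provable_imp_trans hφ' himp
    · exact conj_imp_mem (by
        refine List.mem_cons_of_mem _ (List.mem_filter.mpr ⟨hχ, ?_⟩)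
        simpa using hne)
  exact hX.1 ⟨L', hmem, provable_imp_trans himpL hprov⟩

lemma mcs_neg_mem {X : Set (Formula P n)} (hX : MCS X) {φ : Formula P n}
    (h : φ ∉ X) : φ.neg ∈ X := by
  classical
  by_contra hn
  obtain ⟨L1, hL1, hp1⟩ := not_not.mp (hX.2 φ h)
  obtain ⟨L2, hL2, hp2⟩ := not_not.mp (hX.2 φ.neg hn)
  set K1 : List (Formula P n) := L1.filter (fun χ => χ ≠ φ) with hK1
  set K2 : List (Formula P n) := L2.filter (fun χ => χ ≠ φ.neg) with hK2
  have hmem1 : ∀ χ ∈ K1, χ ∈ X := by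
    intro χ hχ
    obtain ⟨h1, h2⟩ := List.mem_filter.mp hχ
    have hne : χ ≠ φ := by simpa using h2
    rcases hL1 χ h1 with h' | h'
    · exact absurd h' hne
    · exact h'
  have hmem2 : ∀ χ ∈ K2, χ ∈ X := by
    intro χ hχ
    obtain ⟨h1, h2⟩ := List.mem_filter.mp hχ
    have hne : χ ≠ φ.neg := by simpa using h2
    rcases hL2 χ h1 with h' | h'
    · exact absurd h' hne
    · exact h'
  -- conj (φ :: K1) → ⊥
  have hc1 : Provable ((conj (φ :: K1)).imp Formula.bot) := by
    refine provable_imp_trans (imp_conj ?_) hp1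
    intro χ hχ
    by_cases hne : χ = φ
    · subst hne; exact conj_imp_mem List.mem_cons_self
    · exact conj_imp_mem (by
        refine List.mem_cons_of_mem _ (List.mem_filter.mpr ⟨hχ, ?_⟩)
        simpa using hne)
  have hc2 : Provable ((conj (φ.neg :: K2)).imp Formula.bot) := by
    refine provable_imp_trans (imp_conj ?_) hp2
    intro χ hχ
    by_cases hne : χ = φ.neg
    · subst hne; exact conj_imp_mem List.mem_cons_self
    · exact conj_imp_mem (by
        refine List.mem_cons_of_mem _ (List.mem_filter.mpr ⟨hχ, ?_⟩)
        simpa using hne)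
  -- conj K1 → φ.neg
  have hneg : Provable ((conj K1).imp φ.neg) := by
    have t : Provable (((conj (φ :: K1)).imp Formula.bot).imp ((conj K1).imp φ.neg)) :=
      Provable.taut (by
        intro v; simp only [conj, List.foldr, Formula.imp, Formula.bot, beval]
        cases beval v φ <;>
          cases beval v (List.foldr Formula.and Formula.top K1) <;> simp)
    exact Provable.mp t hc1
  -- conj (K1 ++ K2) → ⊥
  have hmemA : ∀ χ ∈ K1 ++ K2, χ ∈ X := by
    intro χ hχ
    rcases List.mem_append.mp hχ with h' | h'
    · exact hmem1 χ h'
    · exact hmem2 χ h'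
  have hDK1 : Provable ((conj (K1 ++ K2)).imp (conj K1)) :=
    imp_conj (fun χ hχ => conj_imp_mem (List.mem_append.mpr (Or.inl hχ)))
  have hfin : Provable ((conj (K1 ++ K2)).imp (conj (φ.neg :: K2))) := by
    apply imp_conj
    intro χ hχ
    rcases List.mem_cons.mp hχ with rfl | hχ
    · exact provable_imp_trans hDK1 hneg
    · exact conj_imp_mem (List.mem_append.mpr (Or.inr hχ))
  exact hX.1 ⟨K1 ++ K2, hmemA, provable_imp_trans hfin hc2⟩

lemma mcs_not_both {X : Set (Formula P n)} (hX : MCS X) {φ : Formula P n}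
    (h1 : φ ∈ X) (h2 : φ.neg ∈ X) : False := by
  refine hX.1 ⟨[φ, φ.neg], ?_, ?_⟩
  · intro χ hχ
    rcases List.mem_cons.mp hχ with rfl | hχ
    · exact h1
    · rcases List.mem_cons.mp hχ with rfl | hχ
      · exact h2
      · cases hχ
  · exact Provable.taut (by
      intro v; simp only [conj, List.foldr, Formula.imp, Formula.bot, beval]
      cases beval v φ <;> simp)

lemma step_back {X : Set (Formula P n)} (hX : MCS X) (c : CStep P n)
    (hcX : MCS c.X) (hpush : ∀ ψ, Formula.K c.H ψ ∈ X → ψ ∈ c.X)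
    {H : Grp n} {φ : Formula P n} (hmem : Formula.K H φ ∈ c.X) (hHH : H ⊆ c.H) :
    Formula.K H φ ∈ X := by
  by_contra h
  have h1 : (Formula.K H φ).neg ∈ X := mcs_neg_mem hX h
  have h2 : Formula.K H ((Formula.K H φ).neg) ∈ X := mcs_closed hX h1 Provable.ax5
  have h3 : Formula.K c.H ((Formula.K H φ).neg) ∈ X :=
    mcs_closed hX h2 (Provable.axKMono hHH)
  exact mcs_not_both hcX hmem (hpush _ h3)

lemma K_persists_aux :
    ∀ (l : List (CStep P n)) (X0 : Set (Formula P n)), MCS X0 → goodFrom X0 l →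
    ∀ k, k ≤ l.length → ∀ (H : Grp n) (φ : Formula P n),
    Formula.K H φ ∈ edOf X0 l →
    (∀ j, k < j → j ≤ l.length → H ⊆ (l.getD (j-1) default).H) →
    Formula.K H φ ∈ edOf X0 (l.take k)
  | [], X0, _, _, k, hk, H, φ, h1, _ => by
    simp only [List.take_nil]; exact h1
  | c :: rest, X0, hX0, hl, k, hk, H, φ, h1, h2 => by
    obtain ⟨hMCS, -, -, -, hpush, hrest⟩ := hl
    have h1' : Formula.K H φ ∈ edOf c.X rest := h1
    cases k with
    | zero =>
      have h2' : ∀ j, 0 < j → j ≤ rest.length → H ⊆ (rest.getD (j-1) default).H := by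
        intro j hj hjlen
        obtain ⟨m, rfl⟩ : ∃ m, j = m + 1 := ⟨j - 1, by omega⟩
        have := h2 (m + 2) (by omega) (by simp; omega)
        simpa using this
      have hc := K_persists_aux rest c.X hMCS hrest 0 (Nat.zero_le _) H φ h1' h2'
      have hc' : Formula.K H φ ∈ c.X := hc
      have hsub : H ⊆ c.H := by
        have := h2 1 (by omega) (by simp)
        simpa using this
      exact step_back hX0 c hMCS hpush hc' hsub
    | succ k' =>
      have h2' : ∀ j, k' < j → j ≤ rest.length → H ⊆ (rest.getD (j-1) default).H := by
        intro j hj hjlen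
        obtain ⟨m, rfl⟩ : ∃ m, j = m + 1 := ⟨j - 1, by omega⟩
        have := h2 (m + 2) (by omega) (by simp; omega)
        simpa using this
      exact K_persists_aux rest c.X hMCS hrest k' (by simpa using hk) H φ h1' h2'

end Aux

/-- For any canonical-model state X_0⟨(φ_1,G_1),H_1⟩X_1⋯⟨(φ_n,G_n),H_n⟩X_n,
any k ≤ n, group H, formula φ: if K_H φ ∈ X_n and H ⊆ H_j for all k < j ≤ n,
then K_H φ ∈ X_k. (Here X_k = edOf X0 (l.take k) and H_j = (l.getD (j-1)).H.) -/
theorem K_persists_backwards {P : Type} [Countable P] {n : ℕ}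
    (X0 : Set (Formula P n)) (hX0 : MCS X0)
    (l : List (CStep P n)) (hl : goodFrom X0 l)
    (k : ℕ) (hk : k ≤ l.length) (H : Grp n) (φ : Formula P n)
    (h1 : Formula.K H φ ∈ edOf X0 l)
    (h2 : ∀ j, k < j → j ≤ l.length → H ⊆ (l.getD (j-1) default).H) :
    Formula.K H φ ∈ edOf X0 (l.take k) :=
  K_persists_aux l X0 hX0 hl k hk H φ h1 h2

end DKH
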